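/- For f : [a,b] → W, p ≥ 1, and δ ≥ 0, one has TV(f,[a,b],δ) ≥ (osc(f,[a,b]) − δ)₊ where osc(f,[a,b]) = sup_{a≤s<t≤b} ‖f(t) − f(s)‖. Consequently ‖f‖_{p-TV,[a,b]} ≥ c_p^{1/p} · osc(f,[a,b]) with c_p = (p−1)^{p−1}/p^p, and ‖f(a)‖ + ‖f‖_{p-TV,[a,b]} ≥ c_p^{1/p} · sup_{t∈[a,b]} ‖f(t)‖. -/

import Mathlib

open Set Filter Topology ENNReal

noncomputable def truncVar {E : Type*} [PseudoMetricSpace E] (f : ℝ → E) (a b δ : ℝ) : ℝ≥0∞ :=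
  ⨆ (n : ℕ) (t : Fin (n + 1) → ℝ) (_ : StrictMono t) (_ : ∀ i, t i ∈ Set.Icc a b),
    ENNReal.ofReal (∑ i : Fin n, max (dist (f (t i.succ)) (f (t i.castSucc)) - δ) 0)

def Regulated {E : Type*} [PseudoMetricSpace E] (f : ℝ → E) (a b : ℝ) : Prop :=
  (∀ t ∈ Set.Ico a b, ∃ L, Filter.Tendsto f (nhdsWithin t (Set.Ioi t)) (nhds L)) ∧
  (∀ t ∈ Set.Ioc a b, ∃ L, Filter.Tendsto f (nhdsWithin t (Set.Iio t)) (nhds L))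

noncomputable def pTVsup {W : Type*} [NormedAddCommGroup W] (f : ℝ → W) (a b p : ℝ) : ℝ≥0∞ :=
  ⨆ (δ : ℝ) (_ : 0 < δ), ENNReal.ofReal (δ ^ (p - 1)) * truncVar f a b δ

noncomputable def pTVnorm {W : Type*} [NormedAddCommGroup W] (f : ℝ → W) (a b p : ℝ) : ℝ≥0∞ :=
  pTVsup f a b p ^ (1 / p)


lemma twoPoint {W : Type*} [NormedAddCommGroup W] (f : ℝ → W) (a b δ s t : ℝ)
    (hs : a ≤ s) (hst : s < t) (ht : t ≤ b) :
    ENNReal.ofReal (‖f t - f s‖ - δ) ≤ truncVar f a b δ := by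
  have hmono : StrictMono (![s, t] : Fin 2 → ℝ) := by
    rw [Fin.strictMono_iff_lt_succ]
    intro i
    fin_cases i
    simpa using hst
  have hmem : ∀ i, (![s, t] : Fin 2 → ℝ) i ∈ Set.Icc a b := by
    intro i
    fin_cases i
    · exact ⟨hs, hst.le.trans ht⟩
    · exact ⟨hs.trans hst.le, ht⟩
  have h1 : ENNReal.ofReal (‖f t - f s‖ - δ) ≤
      ENNReal.ofReal (∑ i : Fin 1,
        max (dist (f ((![s, t] : Fin 2 → ℝ) i.succ)) (f ((![s, t] : Fin 2 → ℝ) i.castSucc)) - δ) 0) := by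
    apply ENNReal.ofReal_le_ofReal
    simp [Fin.sum_univ_one, dist_eq_norm]
  exact h1.trans (le_iSup_of_le 1 (le_iSup_of_le ![s, t]
    (le_iSup_of_le hmono (le_iSup_of_le hmem le_rfl))))

lemma limitLem (D : ℝ) (X : ℝ≥0∞) (h : ∀ δ > (0:ℝ), ENNReal.ofReal (D - δ) ≤ X) :
    ENNReal.ofReal D ≤ X := by
  have h2 : Tendsto (fun n : ℕ => ENNReal.ofReal (D - 1/(n+1))) atTop (nhds (ENNReal.ofReal D)) := by
    apply ENNReal.tendsto_ofReal
    have : Tendsto (fun n : ℕ => D - 1/(n+1)) atTop (nhds (D - 0)) :=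
      tendsto_const_nhds.sub tendsto_one_div_add_atTop_nhds_zero_nat
    simpa using this
  exact le_of_tendsto h2 (Eventually.of_forall fun n => h _ (by positivity))

lemma coreBound {W : Type*} [NormedAddCommGroup W] (f : ℝ → W) (a b p s t : ℝ)
    (hp : 1 ≤ p) (hs : a ≤ s) (hst : s < t) (ht : t ≤ b) :
    ENNReal.ofReal ((p - 1) ^ (p - 1) / p ^ p * ‖f t - f s‖ ^ p) ≤ pTVsup f a b p := by
  set D := ‖f t - f s‖ with hD
  have hD0 : 0 ≤ D := norm_nonneg _
  have hp0 : 0 < p := lt_of_lt_of_le one_pos hp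
  rcases eq_or_lt_of_le hD0 with hD0' | hDpos
  · rw [← hD0', Real.zero_rpow hp0.ne', mul_zero, ENNReal.ofReal_zero]
    exact zero_le
  rcases eq_or_lt_of_le hp with hp1 | hp1
  · -- p = 1
    have hc : (p - 1) ^ (p - 1) / p ^ p * D ^ p = D := by
      rw [← hp1]; simp [Real.rpow_one, Real.rpow_zero]
    rw [hc]
    apply limitLem
    intro δ' hδ'
    have h2 : ENNReal.ofReal (D - δ') ≤ ENNReal.ofReal (δ' ^ (p - 1)) * truncVar f a b δ' := by
      have he : δ' ^ (p - 1) = 1 := by rw [← hp1]; simp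
      rw [he, ENNReal.ofReal_one, one_mul]
      exact twoPoint f a b δ' s t hs hst ht
    exact h2.trans (le_iSup_of_le δ' (le_iSup_of_le hδ' le_rfl))
  · -- p > 1
    have hpm : 0 < p - 1 := by linarith
    set δ₀ := (p - 1) / p * D with hδ₀
    have hδ₀pos : 0 < δ₀ := mul_pos (div_pos hpm hp0) hDpos
    have hDδ : D - δ₀ = D / p := by
      rw [hδ₀]; field_simp; ring
    have key : δ₀ ^ (p - 1) * (D - δ₀) = (p - 1) ^ (p - 1) / p ^ p * D ^ p := by
      rw [hDδ, hδ₀, Real.mul_rpow (by positivity) hD0,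
        Real.div_rpow hpm.le hp0.le]
      have h1 : D ^ (p - 1) * D = D ^ p := by
        rw [← Real.rpow_add_one hDpos.ne']; ring_nf
      have h2 : p ^ (p - 1) * p = p ^ p := by
        rw [← Real.rpow_add_one hp0.ne']; ring_nf
      field_simp
      rw [← h2, ← h1]; ring
    rw [← key, ENNReal.ofReal_mul (by positivity)]
    have h3 : ENNReal.ofReal (δ₀ ^ (p - 1)) * ENNReal.ofReal (D - δ₀) ≤
        ENNReal.ofReal (δ₀ ^ (p - 1)) * truncVar f a b δ₀ :=
      mul_le_mul_right (twoPoint f a b δ₀ s t hs hst ht) _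
    exact h3.trans (le_iSup_of_le δ₀ (le_iSup_of_le hδ₀pos le_rfl))

lemma pointwiseBound {W : Type*} [NormedAddCommGroup W] (f : ℝ → W) (a b p s t : ℝ)
    (hp : 1 ≤ p) (hs : a ≤ s) (hst : s < t) (ht : t ≤ b) :
    ENNReal.ofReal ((p - 1) ^ (p - 1) / p ^ p) ^ (1 / p) * ENNReal.ofReal ‖f t - f s‖ ≤
      pTVnorm f a b p := by
  have hp0 : 0 < p := lt_of_lt_of_le one_pos hp
  set c : ℝ := (p - 1) ^ (p - 1) / p ^ p with hcdef
  have hc0 : 0 ≤ c := by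
    rw [hcdef]
    apply div_nonneg (Real.rpow_nonneg (by linarith) _) (Real.rpow_nonneg hp0.le _)
  set D := ‖f t - f s‖ with hDdef
  have hD0 : 0 ≤ D := norm_nonneg _
  have h1 : ENNReal.ofReal c ^ (1 / p) * ENNReal.ofReal D =
      ENNReal.ofReal (c * D ^ p) ^ (1 / p) := by
    rw [ENNReal.ofReal_rpow_of_nonneg hc0 (by positivity),
      ENNReal.ofReal_rpow_of_nonneg (by positivity) (by positivity),
      ← ENNReal.ofReal_mul (by positivity)]
    congr 1
    rw [Real.mul_rpow hc0 (Real.rpow_nonneg hD0 _), ← Real.rpow_mul hD0,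
      mul_one_div_cancel hp0.ne', Real.rpow_one]
  rw [h1]
  exact ENNReal.rpow_le_rpow (coreBound f a b p s t hp hs hst ht) (by positivity)

lemma cLeOne (p : ℝ) (hp : 1 ≤ p) :
    ENNReal.ofReal ((p - 1) ^ (p - 1) / p ^ p) ^ (1 / p) ≤ 1 := by
  have hp0 : 0 < p := lt_of_lt_of_le one_pos hp
  have h1 : (p - 1) ^ (p - 1) ≤ p ^ p := by
    calc (p - 1) ^ (p - 1) ≤ p ^ (p - 1) :=
          Real.rpow_le_rpow (by linarith) (by linarith) (by linarith)
      _ ≤ p ^ p := Real.rpow_le_rpow_of_exponent_le hp (by linarith)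
  have h2 : (p - 1) ^ (p - 1) / p ^ p ≤ 1 :=
    (div_le_one (Real.rpow_pos_of_pos hp0 p)).mpr h1
  calc ENNReal.ofReal ((p - 1) ^ (p - 1) / p ^ p) ^ (1 / p)
      ≤ (1 : ℝ≥0∞) ^ (1 / p) :=
        ENNReal.rpow_le_rpow (by simpa using ENNReal.ofReal_le_one.mpr h2) (by positivity)
    _ = 1 := ENNReal.one_rpow _

theorem stmt_16 {W : Type*} [NormedAddCommGroup W] [NormedSpace ℝ W]
    (a b p δ : ℝ) (hab : a < b) (hp : 1 ≤ p) (hδ : 0 ≤ δ) (f : ℝ → W) :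
    (⨆ (s : ℝ) (t : ℝ) (_ : a ≤ s) (_ : s < t) (_ : t ≤ b),
        ENNReal.ofReal (‖f t - f s‖ - δ)) ≤ truncVar f a b δ ∧
    ENNReal.ofReal ((p - 1) ^ (p - 1) / p ^ p) ^ (1 / p) *
        (⨆ (s : ℝ) (t : ℝ) (_ : a ≤ s) (_ : s < t) (_ : t ≤ b),
          ENNReal.ofReal ‖f t - f s‖) ≤ pTVnorm f a b p ∧
    ENNReal.ofReal ((p - 1) ^ (p - 1) / p ^ p) ^ (1 / p) *
        (⨆ (t : ℝ) (_ : t ∈ Set.Icc a b), ENNReal.ofReal ‖f t‖) ≤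
      ENNReal.ofReal ‖f a‖ + pTVnorm f a b p := by
  refine ⟨?_, ?_, ?_⟩
  · exact iSup_le fun s => iSup_le fun t => iSup_le fun hs => iSup_le fun hst =>
      iSup_le fun ht => twoPoint f a b δ s t hs hst ht
  · simp_rw [ENNReal.mul_iSup]
    exact iSup_le fun s => iSup_le fun t => iSup_le fun hs => iSup_le fun hst =>
      iSup_le fun ht => pointwiseBound f a b p s t hp hs hst ht
  · simp_rw [ENNReal.mul_iSup]
    refine iSup_le fun t => iSup_le fun ht => ?_
    rcases eq_or_lt_of_le ht.1 with h | h
    · subst h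
      calc ENNReal.ofReal ((p - 1) ^ (p - 1) / p ^ p) ^ (1 / p) * ENNReal.ofReal ‖f a‖
          ≤ 1 * ENNReal.ofReal ‖f a‖ := mul_le_mul_left (cLeOne p hp) _
        _ = ENNReal.ofReal ‖f a‖ := one_mul _
        _ ≤ _ := le_self_add
    · have hnorm : ‖f t‖ ≤ ‖f a‖ + ‖f t - f a‖ := by
        have := norm_add_le (f a) (f t - f a); simpa using this
      calc ENNReal.ofReal ((p - 1) ^ (p - 1) / p ^ p) ^ (1 / p) * ENNReal.ofReal ‖f t‖
          ≤ ENNReal.ofReal ((p - 1) ^ (p - 1) / p ^ p) ^ (1 / p) *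
            (ENNReal.ofReal ‖f a‖ + ENNReal.ofReal ‖f t - f a‖) := by
            refine mul_le_mul_right ?_ _
            rw [← ENNReal.ofReal_add (norm_nonneg _) (norm_nonneg _)]
            exact ENNReal.ofReal_le_ofReal hnorm
        _ = ENNReal.ofReal ((p - 1) ^ (p - 1) / p ^ p) ^ (1 / p) * ENNReal.ofReal ‖f a‖ +
            ENNReal.ofReal ((p - 1) ^ (p - 1) / p ^ p) ^ (1 / p) * ENNReal.ofReal ‖f t - f a‖ :=
            mul_add _ _ _
        _ ≤ ENNReal.ofReal ‖f a‖ + pTVnorm f a b p := by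
            refine add_le_add ?_ (pointwiseBound f a b p a t hp le_rfl h ht.2)
            calc _ ≤ 1 * ENNReal.ofReal ‖f a‖ := mul_le_mul_left (cLeOne p hp) _
              _ = _ := one_mul _
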